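/- There exist sequences (xₙ) and (yₙ) in ℓ¹ and vectors x, y ∈ ℓ¹ such that xₙ → x and yₙ → y in the ℓ¹ norm, yet g(yₙ, xₙ) does not converge to g(y, x). Concretely, yₙ = (1/n, 1, 0, 0, …), xₙ = (1 + 1/n, 1, 0, 0, …), y = (0, 1, 0, 0, …) and x = (1, 1, 0, 0, …) satisfy g(yₙ, xₙ) = (1 + 1/n)(2 + 1/n) → 2 while g(y, x) = 1. -/

import Mathlib

open scoped ENNReal

/-- The semi-inner product on `ℓ¹`: `g(x,y) = ‖x‖₁ · ∑ₖ sgn(ξₖ) ηₖ`. -/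
noncomputable def gL1 (x y : lp (fun _ : ℕ => ℝ) 1) : ℝ :=
  ‖x‖ * ∑' k : ℕ, Real.sign (x k) * y k

private lemma coord2 (a b : ℝ) (k : ℕ) :
    (lp.single 1 0 a + lp.single 1 1 b : lp (fun _ : ℕ => ℝ) 1) k =
      if k = 0 then a else if k = 1 then b else 0 := by
  have : (lp.single 1 0 a + lp.single 1 1 b : lp (fun _ : ℕ => ℝ) 1) k
      = (lp.single 1 (0:ℕ) a : lp (fun _ : ℕ => ℝ) 1) k + (lp.single 1 (1:ℕ) b : lp (fun _ : ℕ => ℝ) 1) k := by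
    rw [lp.coeFn_add]; rfl
  rw [this]
  rcases eq_or_ne k 0 with rfl | h0
  · simp [lp.single_apply_self, lp.single_apply_ne]
  rcases eq_or_ne k 1 with rfl | h1
  · simp [lp.single_apply_self, lp.single_apply_ne]
  · simp [lp.single_apply_ne _ _ _ h0, lp.single_apply_ne _ _ _ h1, h0, h1]

private lemma single_add' (i : ℕ) (a b : ℝ) :
    (lp.single 1 i (a + b) : lp (fun _ : ℕ => ℝ) 1) = lp.single 1 i a + lp.single 1 i b := by
  apply lp.ext
  funext j
  rw [lp.coeFn_add, Pi.add_apply]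
  by_cases h : j = i
  · subst h; simp [lp.single_apply_self]
  · simp [lp.single_apply_ne _ _ _ h]

private lemma single_zero' (i : ℕ) :
    (lp.single 1 i (0:ℝ) : lp (fun _ : ℕ => ℝ) 1) = 0 := by
  apply lp.ext
  funext j
  by_cases h : j = i
  · subst h; simp [lp.single_apply_self]
  · simp [lp.single_apply_ne _ _ _ h]

private lemma norm2 (a b : ℝ) :
    ‖(lp.single 1 0 a + lp.single 1 1 b : lp (fun _ : ℕ => ℝ) 1)‖ = |a| + |b| := by
  set f : ∀ _ : ℕ, ℝ := fun k => if k = 0 then a else if k = 1 then b else 0 with hf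
  have hs : (lp.single 1 0 a + lp.single 1 1 b : lp (fun _ : ℕ => ℝ) 1)
      = ∑ i ∈ ({0, 1} : Finset ℕ), lp.single 1 i (f i) := by
    rw [Finset.sum_pair (by norm_num : (0:ℕ) ≠ 1)]
    simp [hf]
  have hp : 0 < (1 : ℝ≥0∞).toReal := by norm_num
  have := lp.norm_sum_single (E := fun _ : ℕ => ℝ) hp f ({0, 1} : Finset ℕ)
  rw [Finset.sum_pair (by norm_num : (0:ℕ) ≠ 1)] at this
  have h1 : (1 : ℝ≥0∞).toReal = 1 := by norm_num
  rw [h1] at this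
  simp only [Real.rpow_one] at this
  rw [hs]
  rw [Finset.sum_pair (by norm_num : (0:ℕ) ≠ 1)]
  rw [this]
  simp [hf, Real.norm_eq_abs]

private lemma tsum2 (g : ℕ → ℝ) (hg : ∀ k, 2 ≤ k → g k = 0) :
    ∑' k, g k = g 0 + g 1 := by
  rw [tsum_eq_sum (s := ({0, 1} : Finset ℕ))
      (fun k hk => hg k (by
        rcases Nat.lt_or_ge k 2 with h | h
        · interval_cases k <;> simp_all
        · exact h))]
  rw [Finset.sum_pair (by norm_num : (0:ℕ) ≠ 1)]

private lemma gL1_formula (a b c d : ℝ) :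
    gL1 (lp.single 1 0 a + lp.single 1 1 b) (lp.single 1 0 c + lp.single 1 1 d) =
      (|a| + |b|) * (Real.sign a * c + Real.sign b * d) := by
  unfold gL1
  rw [norm2]
  congr 1
  rw [tsum2 _ (fun k hk => by
    rw [coord2, coord2]
    have h0 : k ≠ 0 := by omega
    have h1 : k ≠ 1 := by omega
    simp [h0, h1])]
  rw [coord2, coord2, coord2, coord2]
  norm_num

theorem gL1_not_continuous :
    ∀ (xs ys : ℕ → lp (fun _ : ℕ => ℝ) 1) (x y : lp (fun _ : ℕ => ℝ) 1),
      (∀ n : ℕ, ys n = lp.single 1 0 (1 / (n : ℝ)) + lp.single 1 1 (1 : ℝ)) →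
      (∀ n : ℕ, xs n = lp.single 1 0 (1 + 1 / (n : ℝ)) + lp.single 1 1 (1 : ℝ)) →
      y = lp.single 1 1 (1 : ℝ) →
      x = lp.single 1 0 (1 : ℝ) + lp.single 1 1 (1 : ℝ) →
      Filter.Tendsto xs Filter.atTop (nhds x) ∧
      Filter.Tendsto ys Filter.atTop (nhds y) ∧
      (∀ n : ℕ, 1 ≤ n →
        gL1 (ys n) (xs n) = (1 + 1 / (n : ℝ)) * (2 + 1 / (n : ℝ))) ∧
      Filter.Tendsto (fun n => gL1 (ys n) (xs n)) Filter.atTop (nhds 2) ∧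
      gL1 y x = 1 ∧
      ¬ Filter.Tendsto (fun n => gL1 (ys n) (xs n)) Filter.atTop (nhds (gL1 y x)) := by
  intro xs ys x y hys hxs hy hx
  have hlim : Filter.Tendsto (fun n : ℕ => (1 : ℝ) / n) Filter.atTop (nhds 0) :=
    tendsto_one_div_atTop_nhds_zero_nat
  have hxlim : Filter.Tendsto xs Filter.atTop (nhds x) := by
    rw [tendsto_iff_norm_sub_tendsto_zero]
    have heq : ∀ n : ℕ, ‖xs n - x‖ = 1 / (n : ℝ) := by
      intro n
      have : xs n - x = lp.single 1 0 (1 / (n : ℝ)) := by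
        rw [hxs n, hx]
        rw [single_add' 0 1 (1 / (n : ℝ))]; abel
      rw [this]
      have := lp.norm_single (E := fun _ : ℕ => ℝ) (by norm_num : (0:ℝ≥0∞) < 1)
        0 (1 / (n : ℝ))
      rw [this]
      simp [Real.norm_eq_abs, abs_of_nonneg (by positivity : (0:ℝ) ≤ 1 / (n:ℝ))]
    simpa [heq] using hlim
  have hylim : Filter.Tendsto ys Filter.atTop (nhds y) := by
    rw [tendsto_iff_norm_sub_tendsto_zero]
    have heq : ∀ n : ℕ, ‖ys n - y‖ = 1 / (n : ℝ) := by
      intro n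
      have : ys n - y = lp.single 1 0 (1 / (n : ℝ)) := by
        rw [hys n, hy]; abel
      rw [this]
      have := lp.norm_single (E := fun _ : ℕ => ℝ) (by norm_num : (0:ℝ≥0∞) < 1)
        0 (1 / (n : ℝ))
      rw [this]
      simp [Real.norm_eq_abs, abs_of_nonneg (by positivity : (0:ℝ) ≤ 1 / (n:ℝ))]
    simpa [heq] using hlim
  have hval : ∀ n : ℕ, 1 ≤ n →
      gL1 (ys n) (xs n) = (1 + 1 / (n : ℝ)) * (2 + 1 / (n : ℝ)) := by
    intro n hn
    have hnpos : (0 : ℝ) < 1 / (n : ℝ) := by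
      have : (0:ℝ) < (n:ℝ) := by exact_mod_cast hn
      positivity
    rw [hys n, hxs n, gL1_formula]
    rw [Real.sign_of_pos hnpos, Real.sign_of_pos (by norm_num : (0:ℝ) < 1)]
    rw [abs_of_pos hnpos, abs_of_nonneg (by norm_num : (0:ℝ) ≤ 1)]
    ring
  have hval2 : gL1 y x = 1 := by
    have hy' : y = lp.single 1 0 (0:ℝ) + lp.single 1 1 (1:ℝ) := by
      rw [hy, single_zero', zero_add]
    rw [hy', hx, gL1_formula]
    simp [Real.sign_of_pos (by norm_num : (0:ℝ) < 1)]
  have hlim2 : Filter.Tendsto (fun n => gL1 (ys n) (xs n)) Filter.atTop (nhds 2) := by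
    have h2 : Filter.Tendsto (fun n : ℕ => (1 + 1 / (n : ℝ)) * (2 + 1 / (n : ℝ)))
        Filter.atTop (nhds 2) := by
      have := ((tendsto_const_nhds (x := (1:ℝ))).add hlim).mul
        ((tendsto_const_nhds (x := (2:ℝ))).add hlim)
      simpa using this
    refine h2.congr' ?_
    filter_upwards [Filter.eventually_ge_atTop 1] with n hn
    exact (hval n hn).symm
  refine ⟨hxlim, hylim, hval, hlim2, hval2, ?_⟩
  intro hcon
  rw [hval2] at hcon
  have := tendsto_nhds_unique hlim2 hcon
  norm_num at this
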